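/- Let F : ℝ → ℝ be C¹ and strictly concave with F(0) = 1, F'(0) = 0, and suppose F(x₂) = 1 + c·x₂^{2k} + r(x₂) where c < 0, k ≥ 1, and r(x₂) = O(|x₂|^{2k+1}) is C¹ with r'(x₂) = O(|x₂|^{2k}). Fix b₂ ≠ 0. Then there is δ > 0 such that for |x₂| < δ, the equation F(x₂) − 1 − F'(x₂)(x₂ − b₂) = 0 holds if and only if x₂ = 0. -/

import Mathlib

/-- For a 2D strictly convex obstacle `x₁ < F(x₂)` with `F(x₂) = 1 + c x₂^{2k} + r(x₂)`,
`c < 0`, `r = O(|x₂|^{2k+1})`, and a source with `b₂ ≠ 0`, the grazing equation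
`F(x₂) − 1 − F'(x₂)(x₂ − b₂) = 0` holds near `0` only at `x₂ = 0`. -/
theorem grazing_set_2D (F r : ℝ → ℝ) (c : ℝ) (k : ℕ) (b₂ : ℝ)
    (hF1 : ContDiff ℝ 1 F)
    (hconc : ∀ z₁ z₂, F z₂ - F z₁ ≤ deriv F z₁ * (z₂ - z₁))
    (hstrict : ∀ z₁ z₂, F z₂ - F z₁ = deriv F z₁ * (z₂ - z₁) → z₁ = z₂)
    (hF0 : F 0 = 1) (hF'0 : deriv F 0 = 0)
    (hc : c < 0) (hk : 1 ≤ k)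
    (hFeq : ∀ x, F x = 1 + c * x ^ (2 * k) + r x)
    (hr : ContDiff ℝ 1 r)
    (hrO : ∃ C > (0 : ℝ), ∃ δ₀ > (0 : ℝ), ∀ x, |x| < δ₀ →
      |r x| ≤ C * |x| ^ (2 * k + 1) ∧ |deriv r x| ≤ C * |x| ^ (2 * k))
    (hb : b₂ ≠ 0) :
    ∃ δ > (0 : ℝ), ∀ x, |x| < δ →
      (F x - 1 - deriv F x * (x - b₂) = 0 ↔ x = 0) := by
  obtain ⟨C, hC, δ₀, hδ₀, hrb⟩ := hrO
  have hrdiff : Differentiable ℝ r := hr.differentiable one_ne_zero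
  obtain ⟨m, hmk⟩ : ∃ m, 2 * k = m + 1 := ⟨2 * k - 1, by omega⟩
  set N : ℝ := (m : ℝ) + 1 with hN
  have hNpos : 0 < N := by positivity
  have hderiv : ∀ x, deriv F x = c * (N * x ^ m) + deriv r x := by
    intro x
    have hFf : F = fun x => 1 + c * x ^ (m + 1) + r x := by
      funext y; rw [hFeq y, hmk]
    have h1 : HasDerivAt (fun x : ℝ => 1 + c * x ^ (m + 1) + r x)
        (c * (N * x ^ m) + deriv r x) x := by
      have h2 := ((hasDerivAt_pow (m + 1) x).const_mul c).const_add 1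
      have h3 := h2.add (hrdiff x).hasDerivAt
      have h4 : c * (N * x ^ m) = c * (((m + 1 : ℕ) : ℝ) * x ^ (m + 1 - 1)) := by
        push_cast [Nat.add_sub_cancel] <;> ring
      rw [h4]
      exact h3
    rw [hFf]; exact h1.deriv
  set A : ℝ := |c| * N * |b₂| with hA
  have hApos : 0 < A := by
    have := abs_pos.mpr hc.ne
    have := abs_pos.mpr hb
    positivity
  set M : ℝ := |c| + |c| * N + C + C * (1 + |b₂|) with hM
  have hMpos : 0 < M := by
    have h1 := abs_pos.mpr hc.ne
    have h2 : (0:ℝ) ≤ |b₂| := abs_nonneg _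
    positivity
  refine ⟨min δ₀ (min 1 (A / (M + 1))), lt_min hδ₀ (lt_min one_pos (div_pos hApos (by linarith))), ?_⟩
  intro x hx
  have hx1 : |x| < δ₀ := lt_of_lt_of_le hx (min_le_left _ _)
  have hx2 : |x| < 1 := lt_of_lt_of_le hx ((min_le_right _ _).trans (min_le_left _ _))
  have hx3 : |x| < A / (M + 1) := lt_of_lt_of_le hx ((min_le_right _ _).trans (min_le_right _ _))
  constructor
  · intro hH
    by_contra hx0
    have hxpos : 0 < |x| := abs_pos.mpr hx0
    obtain ⟨hr1, hr2⟩ := hrb x hx1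
    rw [hmk] at hr1 hr2
    have hxm : 0 < |x| ^ m := pow_pos hxpos m
    have e1 : c * N * b₂ * x ^ m = -c * x ^ (m + 1) + c * N * x ^ (m + 1) - r x
        + deriv r x * (x - b₂) := by
      have h := hH
      rw [hFeq x, hmk, hderiv x] at h
      linear_combination h
    have habs : A * |x| ^ m ≤ |c| * |x| ^ (m + 1) + |c| * N * |x| ^ (m + 1) + |r x|
        + |deriv r x| * (|x| + |b₂|) := by
      have h0 : A * |x| ^ m = |c * N * b₂ * x ^ m| := by
        rw [abs_mul, abs_mul, abs_mul, abs_pow, abs_of_pos hNpos]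
      rw [h0, e1]
      calc |(-c * x ^ (m + 1) + c * N * x ^ (m + 1) - r x + deriv r x * (x - b₂))|
          ≤ |(-c * x ^ (m + 1) + c * N * x ^ (m + 1) - r x)| + |deriv r x * (x - b₂)| :=
            abs_add_le _ _
        _ ≤ |(-c * x ^ (m + 1) + c * N * x ^ (m + 1))| + |r x| + |deriv r x * (x - b₂)| := by
            have := abs_sub (-c * x ^ (m + 1) + c * N * x ^ (m + 1)) (r x)
            linarith
        _ ≤ |(-c * x ^ (m + 1))| + |c * N * x ^ (m + 1)| + |r x| + |deriv r x * (x - b₂)| := by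
            have := abs_add_le (-c * x ^ (m + 1)) (c * N * x ^ (m + 1))
            linarith
        _ ≤ |c| * |x| ^ (m + 1) + |c| * N * |x| ^ (m + 1) + |r x|
            + |deriv r x| * (|x| + |b₂|) := by
            rw [abs_mul, abs_neg, abs_pow, abs_mul, abs_mul, abs_pow, abs_of_pos hNpos,
              abs_mul]
            have h4 : |x - b₂| ≤ |x| + |b₂| := abs_sub _ _
            have h5 : (0:ℝ) ≤ |deriv r x| := abs_nonneg _
            nlinarith
    have hy : (0:ℝ) ≤ |x| * |x| ^ m := by positivity
    have h1a : |x| * (|x| * |x| ^ m) ≤ |x| * |x| ^ m := mul_le_of_le_one_left hy hx2.le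
    have h1 : |r x| ≤ C * (|x| * |x| ^ m) := by
      have : |x| ^ (m + 1 + 1) = |x| * (|x| * |x| ^ m) := by ring
      rw [this] at hr1
      exact hr1.trans (mul_le_mul_of_nonneg_left h1a hC.le)
    have h2 : |deriv r x| * (|x| + |b₂|) ≤ C * (1 + |b₂|) * (|x| * |x| ^ m) := by
      have hr2' : |deriv r x| ≤ C * (|x| * |x| ^ m) := by
        have : |x| ^ (m + 1) = |x| * |x| ^ m := by ring
        rw [this] at hr2; exact hr2
      have h6 : |x| + |b₂| ≤ 1 + |b₂| := by linarith
      have h7 : |deriv r x| * (|x| + |b₂|) ≤ (C * (|x| * |x| ^ m)) * (1 + |b₂|) :=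
        mul_le_mul hr2' h6 (by positivity) (by positivity)
      linarith [h7, (by ring : (C * (|x| * |x| ^ m)) * (1 + |b₂|) = C * (1 + |b₂|) * (|x| * |x| ^ m))]
    have hbound : A * |x| ^ m ≤ M * (|x| * |x| ^ m) := by
      have h3 : |x| ^ (m + 1) = |x| * |x| ^ m := by ring
      rw [h3] at habs
      have hMy : M * (|x| * |x| ^ m) = |c| * (|x| * |x| ^ m) + |c| * N * (|x| * |x| ^ m)
          + C * (|x| * |x| ^ m) + C * (1 + |b₂|) * (|x| * |x| ^ m) := by rw [hM]; ring
      linarith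
    have hA2 : A ≤ M * |x| := by
      have := (mul_le_mul_iff_of_pos_right hxm).mp (by linarith [hbound] : A * |x| ^ m ≤ (M * |x|) * |x| ^ m)
      exact this
    have hx4 : |x| * (M + 1) < A := (lt_div_iff₀ (by linarith)).mp hx3
    linarith [hx4, hA2, hxpos]
  · intro h
    subst h
    rw [hF0, hF'0]
    ring
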